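/- arXiv:1502.03345 — 3 statements merged into one kernel-verified Lean document; each statement's English description precedes it below -/
import Mathlib

section
/- The map π⁺ : S³ ∖ H⁺ → S¹, (z₁,z₂) ↦ z₁z₂/|z₁z₂|, is a locally trivial fiber bundle (in particular a surjective submersion), and for each ω ∈ S¹ the fiber (π⁺)⁻¹(ω) is homeomorphic to the open annulus S¹ × (0,1). -/
open Complex

/-- The sphere `S³ ⊂ ℂ²`. -/
def Sphere3 : Set (ℂ × ℂ) := {p | ‖p.1‖ ^ 2 + ‖p.2‖ ^ 2 = 1}

/-- The complement `S³ ∖ H⁺` of the positive Hopf link, as a topological space. -/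
abbrev HopfCompl : Type := {z : ℂ × ℂ // z ∈ Sphere3 ∧ z.1 * z.2 ≠ 0}

/-- The circle `S¹ ⊂ ℂ`. -/
abbrev S1 : Type := {w : ℂ // ‖w‖ = 1}

lemma hc_ne1 (z : HopfCompl) : z.1.1 ≠ 0 := fun h => z.2.2 (by simp [h])
lemma hc_ne2 (z : HopfCompl) : z.1.2 ≠ 0 := fun h => z.2.2 (by simp [h])

noncomputable def hopfToFun (z : HopfCompl) : S1 × (S1 × Set.Ioo (0:ℝ) 1) :=
  (⟨z.1.1 * z.1.2 / (‖z.1.1 * z.1.2‖ : ℂ), by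
      rw [norm_div, Complex.norm_real, Real.norm_eq_abs, _root_.abs_of_nonneg (norm_nonneg _),
        div_self (norm_ne_zero_iff.mpr z.2.2)]⟩,
   ⟨z.1.1 / (‖z.1.1‖ : ℂ), by
      rw [norm_div, Complex.norm_real, Real.norm_eq_abs, _root_.abs_of_nonneg (norm_nonneg _),
        div_self (norm_ne_zero_iff.mpr (hc_ne1 z))]⟩,
   ⟨‖z.1.1‖ ^ 2, by
      constructor
      · exact pow_pos (norm_pos_iff.mpr (hc_ne1 z)) 2
      · have h := z.2.1
        have h2 : 0 < ‖z.1.2‖ := norm_pos_iff.mpr (hc_ne2 z)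
        simp only [Sphere3, Set.mem_setOf_eq] at h
        nlinarith⟩)

noncomputable def hopfInvFun (p : S1 × (S1 × Set.Ioo (0:ℝ) 1)) : HopfCompl :=
  ⟨((Real.sqrt p.2.2 : ℂ) * p.2.1,
    (Real.sqrt (1 - p.2.2) : ℂ) * p.1 * (starRingEnd ℂ) p.2.1), by
    obtain ⟨⟨ω, hω⟩, ⟨u, hu⟩, ⟨t, ht0, ht1⟩⟩ := p
    constructor
    · show ‖_‖ ^ 2 + ‖_‖ ^ 2 = 1
      simp only [norm_mul, Complex.norm_real, Real.norm_eq_abs, Complex.norm_conj, hω, hu,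
        _root_.abs_of_nonneg (Real.sqrt_nonneg _)]
      rw [mul_one, mul_one, mul_one, Real.sq_sqrt ht0.le, Real.sq_sqrt (by linarith)]
      ring
    · show _ ≠ 0
      have h1 : (Real.sqrt t : ℂ) ≠ 0 := by
        simpa using (Real.sqrt_pos.mpr ht0).ne'
      have h2 : (Real.sqrt (1 - t) : ℂ) ≠ 0 := by
        simpa using (Real.sqrt_pos.mpr (by linarith : (0:ℝ) < 1 - t)).ne'
      have hu0 : u ≠ 0 := fun h => by simp [h] at hu
      have hω0 : ω ≠ 0 := fun h => by simp [h] at hω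
      exact mul_ne_zero (mul_ne_zero h1 hu0)
        (mul_ne_zero (mul_ne_zero h2 hω0) (by simpa using hu0))⟩

noncomputable def hopfHomeo : HopfCompl ≃ₜ S1 × (S1 × Set.Ioo (0:ℝ) 1) where
  toFun := hopfToFun
  invFun := hopfInvFun
  left_inv := by
    rintro ⟨⟨a, b⟩, hS, hab⟩
    have ha : a ≠ 0 := fun h => hab (by simp [h])
    have hb : b ≠ 0 := fun h => hab (by simp [h])
    have haC : (‖a‖ : ℂ) ≠ 0 := by simpa using norm_ne_zero_iff.mpr ha
    have hbC : (‖b‖ : ℂ) ≠ 0 := by simpa using norm_ne_zero_iff.mpr hb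
    simp only [Sphere3, Set.mem_setOf_eq] at hS
    apply Subtype.ext
    simp only [hopfInvFun, hopfToFun]
    have h1 : Real.sqrt (‖a‖ ^ 2) = ‖a‖ :=
      Real.sqrt_sq (norm_nonneg a)
    have h2 : Real.sqrt (1 - ‖a‖ ^ 2) = ‖b‖ := by
      rw [show 1 - ‖a‖ ^ 2 = ‖b‖ ^ 2 by linarith]
      exact Real.sqrt_sq (norm_nonneg b)
    refine Prod.ext ?_ ?_
    · show (Real.sqrt (‖a‖ ^ 2) : ℂ) * (a / (‖a‖ : ℂ)) = a
      rw [h1]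
      field_simp
    · show (Real.sqrt (1 - ‖a‖ ^ 2) : ℂ) *
        (a * b / (‖a * b‖ : ℂ)) * (starRingEnd ℂ) (a / (‖a‖ : ℂ)) = b
      rw [h2, map_div₀, Complex.conj_ofReal, norm_mul, Complex.ofReal_mul]
      field_simp
      rw [Complex.mul_conj, Complex.normSq_eq_norm_sq]
      push_cast
      ring
  right_inv := by
    rintro ⟨⟨ω, hω⟩, ⟨u, hu⟩, ⟨t, ht0, ht1⟩⟩
    have hst : (0:ℝ) < Real.sqrt t := Real.sqrt_pos.mpr ht0
    have hst' : (0:ℝ) < Real.sqrt (1 - t) := Real.sqrt_pos.mpr (by linarith)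
    have hu0 : u ≠ 0 := fun h => by simp [h] at hu
    simp only [hopfToFun, hopfInvFun]
    refine Prod.ext (Subtype.ext ?_) (Prod.ext (Subtype.ext ?_) (Subtype.ext ?_))
    · show ((Real.sqrt t : ℂ) * u) * ((Real.sqrt (1 - t) : ℂ) * ω * (starRingEnd ℂ) u) /
        (‖_‖ : ℂ) = ω
      have habs : ‖((Real.sqrt t : ℂ) * u) *
          ((Real.sqrt (1 - t) : ℂ) * ω * (starRingEnd ℂ) u)‖ = Real.sqrt t * Real.sqrt (1 - t) := by
        simp only [norm_mul, Complex.norm_real, Real.norm_eq_abs, Complex.norm_conj, hω, hu,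
          _root_.abs_of_nonneg (Real.sqrt_nonneg _)]
        ring
      rw [habs]
      have : ((Real.sqrt t : ℂ) * u) * ((Real.sqrt (1 - t) : ℂ) * ω * (starRingEnd ℂ) u)
          = (Real.sqrt t : ℂ) * (Real.sqrt (1 - t) : ℂ) * ω * (u * (starRingEnd ℂ) u) := by ring
      have h1C : (Real.sqrt t : ℂ) ≠ 0 := by simpa using hst.ne'
      have h2C : (Real.sqrt (1 - t) : ℂ) ≠ 0 := by simpa using hst'.ne'
      rw [this, Complex.mul_conj, Complex.normSq_eq_norm_sq, hu]
      push_cast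
      rw [one_pow, mul_one]
      exact mul_div_cancel_left₀ ω (mul_ne_zero h1C h2C)
    · show (Real.sqrt t : ℂ) * u / (‖(Real.sqrt t : ℂ) * u‖ : ℂ) = u
      have h1C : (Real.sqrt t : ℂ) ≠ 0 := by simpa using hst.ne'
      rw [norm_mul, Complex.norm_real, Real.norm_eq_abs, hu, mul_one, _root_.abs_of_nonneg (Real.sqrt_nonneg _)]
      exact mul_div_cancel_left₀ u h1C
    · show ‖(Real.sqrt t : ℂ) * u‖ ^ 2 = t
      rw [norm_mul, Complex.norm_real, Real.norm_eq_abs, hu, mul_one, _root_.abs_of_nonneg (Real.sqrt_nonneg _),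
        Real.sq_sqrt ht0.le]
  continuous_toFun := by
    have hc1 : Continuous fun z : HopfCompl => z.1.1 := continuous_fst.comp continuous_subtype_val
    have hc2 : Continuous fun z : HopfCompl => z.1.2 := continuous_snd.comp continuous_subtype_val
    have hcm : Continuous fun z : HopfCompl => z.1.1 * z.1.2 := hc1.mul hc2
    refine Continuous.prodMk (Continuous.subtype_mk ?_ _)
      (Continuous.prodMk (Continuous.subtype_mk ?_ _) (Continuous.subtype_mk ?_ _))
    · exact hcm.div (continuous_ofReal.comp (continuous_norm.comp hcm))
        fun z => by simpa using norm_ne_zero_iff.mpr z.2.2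
    · exact hc1.div (continuous_ofReal.comp (continuous_norm.comp hc1))
        fun z => by simpa using norm_ne_zero_iff.mpr (hc_ne1 z)
    · exact (continuous_norm.comp hc1).pow 2
  continuous_invFun := by
    have hω : Continuous fun p : S1 × (S1 × Set.Ioo (0:ℝ) 1) => (p.1 : ℂ) :=
      continuous_subtype_val.comp continuous_fst
    have hu : Continuous fun p : S1 × (S1 × Set.Ioo (0:ℝ) 1) => (p.2.1 : ℂ) :=
      continuous_subtype_val.comp (continuous_fst.comp continuous_snd)
    have ht : Continuous fun p : S1 × (S1 × Set.Ioo (0:ℝ) 1) => (p.2.2 : ℝ) :=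
      continuous_subtype_val.comp (continuous_snd.comp continuous_snd)
    apply Continuous.subtype_mk
    refine Continuous.prodMk ?_ ?_
    · exact (continuous_ofReal.comp (Real.continuous_sqrt.comp ht)).mul hu
    · exact ((continuous_ofReal.comp (Real.continuous_sqrt.comp (continuous_const.sub ht))).mul
        hω).mul (Complex.continuous_conj.comp hu)


/-- `π⁺ : S³ ∖ H⁺ → S¹`, `(z₁,z₂) ↦ z₁z₂/|z₁z₂|`, is a locally trivial fiber bundle
(in particular a continuous surjection), and each fiber is homeomorphic to the open
annulus `S¹ × (0,1)`. -/
theorem piPlus_fiber_bundle :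
    ∃ π : HopfCompl → S1,
      (∀ z : HopfCompl, (π z : ℂ) = (z.1.1 * z.1.2) / (‖z.1.1 * z.1.2‖ : ℂ)) ∧
      Continuous π ∧ Function.Surjective π ∧
      (∀ ω : S1, ∃ U : Set S1, IsOpen U ∧ ω ∈ U ∧
        ∃ e : {z : HopfCompl // π z ∈ U} ≃ₜ U × (S1 × Set.Ioo (0 : ℝ) 1),
          ∀ z : {z : HopfCompl // π z ∈ U}, ((e z).1 : S1) = π z.1) ∧
      (∀ ω : S1, Nonempty ({z : HopfCompl // π z = ω} ≃ₜ S1 × Set.Ioo (0 : ℝ) 1)) := by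
  refine ⟨fun z => (hopfHomeo z).1, fun z => rfl, ?_, ?_, ?_, ?_⟩
  · exact continuous_fst.comp hopfHomeo.continuous
  · intro ω
    exact ⟨hopfHomeo.symm (ω, ⟨1, by simp⟩, ⟨1/2, by norm_num⟩), by
      simp [Homeomorph.apply_symm_apply]⟩
  · intro ω
    refine ⟨Set.univ, isOpen_univ, Set.mem_univ _, ?_⟩
    refine ⟨{ toFun := fun z => (⟨(hopfHomeo z.1).1, Set.mem_univ _⟩, (hopfHomeo z.1).2),
              invFun := fun p => ⟨hopfHomeo.symm (p.1.1, p.2), Set.mem_univ _⟩,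
              left_inv := fun z => by
                apply Subtype.ext
                simp,
              right_inv := fun p => by
                apply Prod.ext
                · exact Subtype.ext (by simp)
                · simp,
              continuous_toFun := by
                have h : Continuous fun z : {z : HopfCompl // (hopfHomeo z).1 ∈ Set.univ} =>
                    hopfHomeo z.1 := hopfHomeo.continuous.comp continuous_subtype_val
                exact ((continuous_fst.comp h).subtype_mk _).prodMk (continuous_snd.comp h),
              continuous_invFun := by
                apply Continuous.subtype_mk
                exact hopfHomeo.symm.continuous.comp
                  (((continuous_subtype_val.comp continuous_fst)).prodMk continuous_snd) },
      fun z => rfl⟩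
  · intro ω
    refine ⟨{ toFun := fun z => (hopfHomeo z.1).2,
              invFun := fun p => ⟨hopfHomeo.symm (ω, p), by
                show (hopfHomeo (hopfHomeo.symm (ω, p))).1 = ω
                simp⟩,
              left_inv := fun z => by
                obtain ⟨z, hz⟩ := z
                apply Subtype.ext
                show hopfHomeo.symm (ω, (hopfHomeo z).2) = z
                rw [← hz]
                simp,
              right_inv := fun p => by simp,
              continuous_toFun := continuous_snd.comp
                (hopfHomeo.continuous.comp continuous_subtype_val),
              continuous_invFun := by
                apply Continuous.subtype_mk
                exact hopfHomeo.symm.continuous.comp (continuous_const.prodMk continuous_id) }⟩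
end

section
/- The map i₊ : [0,1] × S¹ → S³ defined in polar coordinates by i₊(t,θ) = (√(1−t²), ω−θ, t, θ) (i.e. (z₁,z₂) = (√(1−t²) e^{i(ω−θ)}, t e^{iθ})) for a fixed ω ∈ ℝ is a topological embedding of the closed annulus into S³, whose image intersected with S³ ∖ H⁺ equals the fiber (π⁺)⁻¹(e^{iω}). -/
open Complex

/-- The parametrization `i₊(t,θ) = (√(1−t²) e^{i(ω−θ)}, t e^{iθ})` of the closed
annulus `[0,1] × S¹` into `S³`, written with `s = e^{iθ}` (so `e^{i(ω−θ)} = e^{iω} s̄`). -/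
noncomputable def iPlus (ω : ℝ) (x : Set.Icc (0 : ℝ) 1 × S1) : ℂ × ℂ :=
  ((Real.sqrt (1 - (x.1 : ℝ) ^ 2) : ℂ) * (Complex.exp (ω * Complex.I) * (starRingEnd ℂ) (x.2 : ℂ)),
   ((x.1 : ℝ) : ℂ) * (x.2 : ℂ))

instance : CompactSpace S1 := by
  have h : IsCompact {w : ℂ | ‖w‖ = 1} := by
    have : {w : ℂ | ‖w‖ = 1} = Metric.sphere (0:ℂ) 1 := by
      ext w; simp [Complex.dist_eq]
    rw [this]; exact isCompact_sphere (0:ℂ) 1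
  exact isCompact_iff_compactSpace.mp h

lemma iPlus_continuous (ω : ℝ) : Continuous (iPlus ω) := by
  unfold iPlus
  refine Continuous.prodMk ?_ ?_
  · exact (Complex.continuous_ofReal.comp ((continuous_const.sub
      ((continuous_subtype_val.comp continuous_fst).pow 2)).sqrt)).mul
      (continuous_const.mul (Complex.continuous_conj.comp
        (continuous_subtype_val.comp continuous_snd)))
  · exact (Complex.continuous_ofReal.comp (continuous_subtype_val.comp continuous_fst)).mul
      (continuous_subtype_val.comp continuous_snd)

lemma iPlus_injective (ω : ℝ) : Function.Injective (iPlus ω) := by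
  rintro ⟨⟨t, ht0, ht1⟩, ⟨s, hs⟩⟩ ⟨⟨t', ht0', ht1'⟩, ⟨s', hs'⟩⟩ h
  have h1 := congrArg Prod.fst h
  have h2 := congrArg Prod.snd h
  simp only [iPlus] at h1 h2
  have habs : t = t' := by
    have := congrArg (‖·‖) h2
    simp only [norm_mul, Complex.norm_real, Real.norm_eq_abs, hs, hs', mul_one] at this
    rwa [_root_.abs_of_nonneg ht0, _root_.abs_of_nonneg ht0'] at this
  subst habs
  have hss : s = s' := by
    by_cases ht : t = 0
    · subst ht
      have hsqrt : Real.sqrt (1 - (0:ℝ)^2) = 1 := by norm_num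
      rw [hsqrt] at h1
      have hexp : Complex.exp (ω * Complex.I) ≠ 0 := Complex.exp_ne_zero _
      have hc : (starRingEnd ℂ) s = (starRingEnd ℂ) s' := by
        have h1' : Complex.exp (ω * Complex.I) * (starRingEnd ℂ) s =
            Complex.exp (ω * Complex.I) * (starRingEnd ℂ) s' := by
          simpa using h1
        exact mul_left_cancel₀ hexp h1'
      exact (starRingEnd ℂ).injective hc
    · have htc : ((t : ℝ) : ℂ) ≠ 0 := by exact_mod_cast ht
      exact mul_left_cancel₀ htc h2
  subst hss
  rfl

lemma iPlus_mem (ω : ℝ) (x : Set.Icc (0 : ℝ) 1 × S1) : iPlus ω x ∈ Sphere3 := by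
  obtain ⟨⟨t, ht0, ht1⟩, ⟨s, hs⟩⟩ := x
  have h1t : (0:ℝ) ≤ 1 - t^2 := by nlinarith
  simp only [Sphere3, iPlus, Set.mem_setOf_eq, norm_mul, Complex.norm_real, Real.norm_eq_abs,
    Complex.norm_exp_ofReal_mul_I, Complex.norm_conj, hs, mul_one, one_mul]
  rw [_root_.abs_of_nonneg (Real.sqrt_nonneg _), _root_.abs_of_nonneg ht0, Real.sq_sqrt h1t]
  ring

/-- `i₊` is a topological embedding of the closed annulus `[0,1] × S¹` into `S³`,
and its image intersected with `S³ ∖ H⁺` is exactly the fiber `(π⁺)⁻¹(e^{iω})`. -/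
theorem iPlus_embedding (ω : ℝ) :
    Topology.IsEmbedding (iPlus ω) ∧
    (∀ x, iPlus ω x ∈ Sphere3) ∧
    Set.range (iPlus ω) ∩ {z | z ∈ Sphere3 ∧ z.1 * z.2 ≠ 0} =
      {z : ℂ × ℂ | (z ∈ Sphere3 ∧ z.1 * z.2 ≠ 0) ∧
        (z.1 * z.2) / (‖z.1 * z.2‖ : ℂ) = Complex.exp (ω * Complex.I)} := by
  refine ⟨((iPlus_continuous ω).isClosedEmbedding (iPlus_injective ω)).isEmbedding,
    iPlus_mem ω, ?_⟩
  ext z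
  simp only [Set.mem_inter_iff, Set.mem_range, Set.mem_setOf_eq]
  constructor
  · rintro ⟨⟨x, rfl⟩, hmem, hne⟩
    refine ⟨⟨hmem, hne⟩, ?_⟩
    obtain ⟨⟨t, ht0, ht1⟩, ⟨s, hs⟩⟩ := x
    simp only [iPlus] at hne ⊢
    have h1t : (0:ℝ) ≤ 1 - t^2 := by nlinarith
    have hcs : (starRingEnd ℂ) s * s = 1 := by
      rw [mul_comm, Complex.mul_conj, ← Complex.sq_norm, hs]; norm_num
    have hprod : ((Real.sqrt (1 - t^2) : ℂ) * (Complex.exp (ω * Complex.I) * (starRingEnd ℂ) s)) *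
        (((t:ℝ):ℂ) * s) = ((Real.sqrt (1 - t^2) * t : ℝ) : ℂ) * Complex.exp (ω * Complex.I) := by
      have hstep : ((Real.sqrt (1 - t^2) : ℂ) * (Complex.exp (ω * Complex.I) * (starRingEnd ℂ) s)) *
          (((t:ℝ):ℂ) * s) = ((Real.sqrt (1 - t^2) : ℂ) * ((t:ℝ):ℂ)) * Complex.exp (ω * Complex.I) *
          ((starRingEnd ℂ) s * s) := by ring
      rw [hstep, hcs, mul_one]
      push_cast
      ring
    rw [hprod]
    have hr0 : (Real.sqrt (1 - t^2) * t : ℝ) ≠ 0 := by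
      intro h0
      apply hne
      rw [hprod, h0]
      simp
    have hrpos : (0:ℝ) < Real.sqrt (1 - t^2) * t :=
      lt_of_le_of_ne (mul_nonneg (Real.sqrt_nonneg _) ht0) (Ne.symm hr0)
    rw [norm_mul, Complex.norm_real, Real.norm_eq_abs, Complex.norm_exp_ofReal_mul_I, mul_one,
      _root_.abs_of_pos hrpos]
    rw [mul_comm, mul_div_assoc, div_self (by exact_mod_cast hr0), mul_one]
  · rintro ⟨⟨hmem, hne⟩, hfib⟩
    refine ⟨?_, hmem, hne⟩
    have hz2 : z.2 ≠ 0 := fun h => hne (by simp [h])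
    have hz1 : z.1 ≠ 0 := fun h => hne (by simp [h])
    set t : ℝ := ‖z.2‖ with htdef
    have ht0 : 0 ≤ t := norm_nonneg _
    have htne : t ≠ 0 := norm_ne_zero_iff.mpr hz2
    have hsph : ‖z.1‖ ^ 2 + t ^ 2 = 1 := hmem
    have ht1 : t ≤ 1 := by nlinarith [norm_nonneg z.1, sq_nonneg ‖z.1‖]
    have hsabs : ‖z.2 / (t:ℂ)‖ = 1 := by
      rw [norm_div, Complex.norm_real, Real.norm_eq_abs, _root_.abs_of_nonneg ht0, ← htdef, div_self htne]
    refine ⟨⟨⟨t, ht0, ht1⟩, ⟨z.2 / (t:ℂ), hsabs⟩⟩, ?_⟩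
    have htc : ((t:ℝ):ℂ) ≠ 0 := by exact_mod_cast htne
    have hsqrt : Real.sqrt (1 - t^2) = ‖z.1‖ := by
      rw [show (1:ℝ) - t^2 = ‖z.1‖ ^ 2 by linarith]
      exact Real.sqrt_sq (norm_nonneg _)
    have hexp : Complex.exp (ω * Complex.I) = z.1 * z.2 / ((‖z.1‖ * t : ℝ) : ℂ) := by
      rw [← hfib, norm_mul]
    have hkey : z.2 * (starRingEnd ℂ) z.2 = (((t^2 : ℝ)) : ℂ) := by
      rw [Complex.mul_conj, ← Complex.sq_norm, ← htdef]
    have ha1 : ((‖z.1‖ : ℝ) : ℂ) ≠ 0 := by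
      exact_mod_cast norm_ne_zero_iff.mpr hz1
    unfold iPlus
    simp only
    have hc2 : (((t:ℝ):ℂ)) * (z.2 / (t:ℂ)) = z.2 := mul_div_cancel₀ _ htc
    have hc1 : ((Real.sqrt (1 - t^2) : ℝ) : ℂ) *
        (Complex.exp (ω * Complex.I) * (starRingEnd ℂ) (z.2 / (t:ℂ))) = z.1 := by
      rw [hsqrt, hexp, map_div₀]
      have hconjt : (starRingEnd ℂ) ((t:ℝ):ℂ) = ((t:ℝ):ℂ) := Complex.conj_ofReal t
      rw [hconjt]
      push_cast
      field_simp
      exact_mod_cast hkey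
    exact Prod.ext hc1 hc2
end

section
/- The map π_U : S³ ∖ U → S¹ defined by (z₁,z₂) ↦ z₁/|z₁|, where U = {(z₁,z₂) ∈ S³ : z₁ = 0}, is a locally trivial fiber bundle whose fibers are homeomorphic to the open disk; moreover S³ ∖ U is homeomorphic to S¹ × int(D²). -/
open Complex

/-- The complement `S³ ∖ U` of the unknot `U = {z₁ = 0}`, as a topological space. -/
abbrev UnknotCompl : Type := {z : ℂ × ℂ // z ∈ Sphere3 ∧ z.1 ≠ 0}

/-- The open unit disk `int(D²) ⊂ ℝ²`. -/
abbrev OpenDisk : Type := ↥(Metric.ball (0 : ℝ × ℝ) 1)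

namespace PiUAux

abbrev DiskC : Type := {w : ℂ // ‖w‖ < 1}

lemma abs1_ne (z : UnknotCompl) : (‖z.1.1‖ : ℂ) ≠ 0 := by
  simpa using z.2.2

lemma abs_pi (z : UnknotCompl) :
    ‖z.1.1 / (‖z.1.1‖ : ℂ)‖ = 1 := by
  rw [norm_div, Complex.norm_real, norm_norm,
    div_self (norm_ne_zero_iff.mpr z.2.2)]

noncomputable def π (z : UnknotCompl) : S1 :=
  ⟨z.1.1 / (‖z.1.1‖ : ℂ), abs_pi z⟩

lemma cont_pi : Continuous π := by
  apply Continuous.subtype_mk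
  exact (continuous_fst.comp continuous_subtype_val).div
    (Complex.continuous_ofReal.comp
      (continuous_norm.comp (continuous_fst.comp continuous_subtype_val)))
    fun z => abs1_ne z

lemma abs2_lt (z : UnknotCompl) : ‖z.1.2‖ < 1 := by
  have h : ‖z.1.1‖ ^ 2 + ‖z.1.2‖ ^ 2 = 1 := z.2.1
  have h1 : 0 < ‖z.1.1‖ := norm_pos_iff.mpr z.2.2
  have h2 : 0 ≤ ‖z.1.2‖ := norm_nonneg _
  nlinarith

lemma sqrt_aux (w : DiskC) : 0 < 1 - ‖w.1‖ ^ 2 := by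
  have h2 : 0 ≤ ‖w.1‖ := norm_nonneg _
  nlinarith [w.2]

/-- inverse map `(ω, w) ↦ (ω √(1-|w|²), w)` -/
noncomputable def inv (p : S1 × DiskC) : UnknotCompl := by
  refine ⟨((p.1 : ℂ) * (Real.sqrt (1 - ‖p.2.1‖ ^ 2) : ℝ), p.2.1), ?_, ?_⟩
  · show ‖_‖ ^ 2 + _ = 1
    rw [norm_mul, Complex.norm_real, Real.norm_eq_abs, p.1.2,
      _root_.abs_of_nonneg (Real.sqrt_nonneg _), one_mul,
      Real.sq_sqrt (le_of_lt (sqrt_aux p.2))]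
    ring
  · apply mul_ne_zero
    · intro h; have := p.1.2; rw [h] at this; simp at this
    · simp only [ne_eq, Complex.ofReal_eq_zero]
      exact Real.sqrt_ne_zero'.mpr (sqrt_aux p.2)

noncomputable def H : UnknotCompl ≃ₜ S1 × DiskC where
  toFun z := (π z, ⟨z.1.2, abs2_lt z⟩)
  invFun := inv
  left_inv z := by
    apply Subtype.ext
    have hsq : 1 - ‖z.1.2‖ ^ 2 = ‖z.1.1‖ ^ 2 := by
      have h : ‖z.1.1‖ ^ 2 + ‖z.1.2‖ ^ 2 = 1 := z.2.1
      linarith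
    show ((_ * _ : ℂ), z.1.2) = z.1
    rw [hsq, Real.sqrt_sq (norm_nonneg _)]
    show ((z.1.1 / (‖z.1.1‖ : ℂ)) * (‖z.1.1‖ : ℂ), z.1.2) = z.1
    rw [div_mul_cancel₀ _ (abs1_ne z)]
  right_inv p := by
    have hr : (0:ℝ) < Real.sqrt (1 - ‖p.2.1‖ ^ 2) :=
      Real.sqrt_pos.mpr (sqrt_aux p.2)
    refine Prod.ext (Subtype.ext ?_) (Subtype.ext rfl)
    show ((p.1 : ℂ) * _) / (‖(p.1 : ℂ) * _‖ : ℂ) = (p.1 : ℂ)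
    rw [norm_mul, Complex.norm_real, Real.norm_eq_abs, p.1.2, _root_.abs_of_nonneg hr.le, one_mul]
    rw [mul_div_assoc, div_self (by simpa using hr.ne'), mul_one]
  continuous_toFun := by
    apply Continuous.prodMk cont_pi
    exact Continuous.subtype_mk (continuous_snd.comp continuous_subtype_val) _
  continuous_invFun := by
    apply Continuous.subtype_mk
    refine Continuous.prodMk ?_ ?_
    · exact (continuous_subtype_val.comp continuous_fst).mul
        (Complex.continuous_ofReal.comp (Real.continuous_sqrt.comp
          (continuous_const.sub ((continuous_pow 2).comp
            (continuous_norm.comp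
              (continuous_subtype_val.comp continuous_snd))))))
    · exact continuous_subtype_val.comp continuous_snd

lemma ball_eq : {w : ℂ | ‖w‖ < 1} = Metric.ball (0 : ℂ) 1 := by
  ext w; simp [Complex.dist_eq]

noncomputable def D2 : DiskC ≃ₜ OpenDisk :=
  (Homeomorph.setCongr ball_eq).trans <|
    (Homeomorph.unitBall (E := ℂ)).symm.trans <|
      Complex.equivRealProdCLM.toHomeomorph.trans (Homeomorph.unitBall (E := ℝ × ℝ))

noncomputable def HD : UnknotCompl ≃ₜ S1 × OpenDisk :=
  H.trans ((Homeomorph.refl S1).prodCongr D2)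

lemma HD_fst (z : UnknotCompl) : (HD z).1 = π z := rfl

noncomputable def fiberEquiv (ω : S1) : {z : UnknotCompl // π z = ω} ≃ₜ OpenDisk where
  toFun z := HD.toFun z.1 |>.2
  invFun d := ⟨HD.symm (ω, d), by
    have : π (HD.symm (ω, d)) = (HD (HD.symm (ω, d))).1 := rfl
    rw [this, HD.apply_symm_apply]⟩
  left_inv z := by
    apply Subtype.ext
    have h : (ω, (HD z.1).2) = HD z.1 := by
      refine Prod.ext ?_ rfl
      exact ((HD_fst z.1).trans z.2).symm
    show HD.symm (ω, (HD z.1).2) = z.1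
    rw [h, HD.symm_apply_apply]
  right_inv d := by
    show (HD (HD.symm (ω, d))).2 = d
    rw [HD.apply_symm_apply]
  continuous_toFun :=
    continuous_snd.comp (HD.continuous.comp continuous_subtype_val)
  continuous_invFun := by
    apply Continuous.subtype_mk
    exact HD.symm.continuous.comp (Continuous.prodMk continuous_const continuous_id)

def subUniv : {z : UnknotCompl // π z ∈ (Set.univ : Set S1)} ≃ₜ UnknotCompl where
  toFun z := z.1
  invFun z := ⟨z, trivial⟩
  left_inv _ := rfl
  right_inv _ := rfl
  continuous_toFun := continuous_subtype_val
  continuous_invFun := Continuous.subtype_mk continuous_id _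

noncomputable def trivEquiv :
    {z : UnknotCompl // π z ∈ (Set.univ : Set S1)} ≃ₜ ↥(Set.univ : Set S1) × OpenDisk :=
  subUniv.trans <|
    HD.trans ((Homeomorph.Set.univ S1).symm.prodCongr (Homeomorph.refl OpenDisk))

end PiUAux

/-- `π_U : S³ ∖ U → S¹`, `(z₁,z₂) ↦ z₁/|z₁|`, is a locally trivial fiber bundle whose
fibers are homeomorphic to the open disk; moreover `S³ ∖ U ≅ S¹ × int(D²)`. -/
theorem piU_fiber_bundle :
    ∃ π : UnknotCompl → S1,
      (∀ z : UnknotCompl, (π z : ℂ) = z.1.1 / (‖z.1.1‖ : ℂ)) ∧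
      Continuous π ∧ Function.Surjective π ∧
      (∀ ω : S1, ∃ U : Set S1, IsOpen U ∧ ω ∈ U ∧
        ∃ e : {z : UnknotCompl // π z ∈ U} ≃ₜ U × OpenDisk,
          ∀ z : {z : UnknotCompl // π z ∈ U}, ((e z).1 : S1) = π z.1) ∧
      (∀ ω : S1, Nonempty ({z : UnknotCompl // π z = ω} ≃ₜ OpenDisk)) ∧
      Nonempty (UnknotCompl ≃ₜ S1 × OpenDisk) := by
  refine ⟨PiUAux.π, fun z => rfl, PiUAux.cont_pi, ?_, ?_, fun ω => ⟨PiUAux.fiberEquiv ω⟩,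
    ⟨PiUAux.HD⟩⟩
  · intro ω
    set d : OpenDisk := PiUAux.D2 ⟨0, by simp⟩ with hd
    refine ⟨PiUAux.HD.symm (ω, d), ?_⟩
    have h : PiUAux.π (PiUAux.HD.symm (ω, d)) = (PiUAux.HD (PiUAux.HD.symm (ω, d))).1 := rfl
    rw [h, PiUAux.HD.apply_symm_apply]
  · intro ω
    refine ⟨Set.univ, isOpen_univ, trivial, PiUAux.trivEquiv, fun z => rfl⟩
end
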